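/- Let A, B, C be three affinely independent points in ℝ² forming an acute triangle, with inradius r, and let y be the perimeter of its orthic (pedal) triangle. Then r < y/4. -/

import Mathlib

open Set Metric MeasureTheory Real EuclideanGeometry

section Aux

variable {E : Type*} [NormedAddCommGroup E] [InnerProductSpace ℝ E]

private lemma foot_eq' (X P Q F : E)
    (hmem : F ∈ affineSpan ℝ ({P, Q} : Set E))
    (hperp : inner ℝ (X - F) (P - Q) = (0:ℝ)) (hne : P ≠ Q) :
    F = Q + ((inner ℝ (X - Q) (P - Q) : ℝ) / ‖P - Q‖^2) • (P - Q) := by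
  obtain ⟨r, hr⟩ := vadd_right_mem_affineSpan_pair.mp
    (show (F -ᵥ Q) +ᵥ Q ∈ affineSpan ℝ ({P, Q} : Set E) by rwa [vsub_vadd])
  simp only [vsub_eq_sub] at hr
  have hn : ‖P - Q‖^2 ≠ 0 :=
    pow_ne_zero 2 (norm_ne_zero_iff.mpr (sub_ne_zero.mpr hne))
  have hF : F = Q + r • (P - Q) := by rw [hr]; abel
  have hperp' : (inner ℝ (X - Q) (P - Q) : ℝ) - r * ‖P - Q‖^2 = 0 := by
    rw [hF] at hperp
    have h0 : X - (Q + r • (P - Q)) = (X - Q) - r • (P - Q) := by abel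
    rw [h0, inner_sub_left, real_inner_smul_left, real_inner_self_eq_norm_sq] at hperp
    linarith
  have hrval : r = (inner ℝ (X - Q) (P - Q) : ℝ) / ‖P - Q‖^2 := by
    rw [eq_div_iff hn]
    linarith
  rw [hF, hrval]

private lemma dist_feet' (p q : E) (hp : p ≠ 0) (hq : q ≠ 0) (ht : 0 ≤ (inner ℝ p q : ℝ)) :
    dist (((inner ℝ p q : ℝ) / ‖q‖^2) • q) (((inner ℝ p q : ℝ) / ‖p‖^2) • p)
      = (inner ℝ p q : ℝ) * ‖p - q‖ / (‖p‖ * ‖q‖) := by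
  have hpn : (0:ℝ) < ‖p‖ := norm_pos_iff.mpr hp
  have hqn : (0:ℝ) < ‖q‖ := norm_pos_iff.mpr hq
  set t : ℝ := inner ℝ p q with htdef
  have h2 : ‖p - q‖^2 = ‖p‖^2 - 2*t + ‖q‖^2 := by
    rw [norm_sub_sq_real]
  have hrhs : (t * ‖p - q‖ / (‖p‖ * ‖q‖))^2
      = t^2 * (‖p‖^2 - 2*t + ‖q‖^2) / (‖p‖^2 * ‖q‖^2) := by
    rw [div_pow, mul_pow, mul_pow, h2]
  have hsq : ‖((t / ‖q‖^2) • q) - ((t / ‖p‖^2) • p)‖^2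
      = (t * ‖p - q‖ / (‖p‖ * ‖q‖))^2 := by
    rw [norm_sub_sq_real, real_inner_smul_left, real_inner_smul_right,
      norm_smul, norm_smul, hrhs]
    have h1 : (inner ℝ q p : ℝ) = t := by rw [htdef]; exact real_inner_comm p q
    rw [h1]
    simp only [mul_pow, Real.norm_eq_abs, sq_abs, div_pow]
    field_simp
  rw [dist_eq_norm, show ‖((t / ‖q‖^2) • q) - ((t / ‖p‖^2) • p)‖
      = Real.sqrt (‖((t / ‖q‖^2) • q) - ((t / ‖p‖^2) • p)‖^2) by
        rw [Real.sqrt_sq (norm_nonneg _)],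
    hsq, Real.sqrt_sq (by positivity)]

private lemma inner_pos_of_angle_lt' (x y : E) (hx : x ≠ 0) (hy : y ≠ 0)
    (h : InnerProductGeometry.angle x y < π / 2) : 0 < (inner ℝ x y : ℝ) := by
  have hcos : 0 < Real.cos (InnerProductGeometry.angle x y) := by
    apply Real.cos_pos_of_mem_Ioo
    constructor
    · have := InnerProductGeometry.angle_nonneg x y
      have := Real.pi_pos
      linarith
    · exact h
  have := InnerProductGeometry.cos_angle_mul_norm_mul_norm x y
  rw [← this]
  have hxn : (0:ℝ) < ‖x‖ := norm_pos_iff.mpr hx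
  have hyn : (0:ℝ) < ‖y‖ := norm_pos_iff.mpr hy
  positivity

end Aux

private lemma key' (a b c : ℝ) (ha : 0 < a) (hb : 0 < b) (hc : 0 < c)
    (hA : a^2 < b^2 + c^2) (hB : b^2 < a^2 + c^2) (hC : c^2 < a^2 + b^2) :
    Real.sqrt (b^2 * c^2 - ((b^2 + c^2 - a^2)/2)^2) / 2 / ((c + a + b)/2)
    < ((a^2 + b^2 - c^2)/2 * c / (a*b) + (b^2 + c^2 - a^2)/2 * a / (b*c)
        + (c^2 + a^2 - b^2)/2 * b / (c*a)) / 4 := by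
  have hx : 0 < b^2+c^2-a^2 := by linarith
  have hy : 0 < a^2+c^2-b^2 := by linarith
  have hz : 0 < a^2+b^2-c^2 := by linarith
  set H : ℝ := 2*a^2*b^2+2*b^2*c^2+2*c^2*a^2-a^4-b^4-c^4 with hHdef
  have hH : 0 < H := by nlinarith [mul_pos hx hy, mul_pos hy hz, mul_pos hx hz]
  have core : 16*a^2*b^2*c^2 < H*(a+b+c)^2 := by
    have h1 : 2*(a^2+b^2+c^2) < (a+b+c)^2 := by
      nlinarith [sq_nonneg (a-b), sq_nonneg (b-c), sq_nonneg (a-c), mul_pos ha hb,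
        mul_pos hb hc, mul_pos ha hc]
    have h2 : 16*a^2*b^2*c^2 ≤ 2*H*(a^2+b^2+c^2) := by
      nlinarith [mul_pos (mul_pos hx hy) hz]
    nlinarith [mul_lt_mul_of_pos_left h1 hH]
  have hbc : b^2 * c^2 - ((b^2 + c^2 - a^2)/2)^2 = H * (1/2)^2 := by
    rw [hHdef]; ring
  rw [hbc, Real.sqrt_mul hH.le, Real.sqrt_sq (by norm_num : (0:ℝ) ≤ 1/2)]
  set u : ℝ := Real.sqrt H with hudef
  have hu : 0 < u := Real.sqrt_pos.mpr hH
  have hu2 : u^2 = H := Real.sq_sqrt hH.le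
  have h4 : 4*(a*b*c) < u*(a+b+c) := by
    apply lt_of_pow_lt_pow_left₀ 2 (by positivity)
    calc (4*(a*b*c))^2 = 16*a^2*b^2*c^2 := by ring
    _ < H*(a+b+c)^2 := core
    _ = (u*(a+b+c))^2 := by rw [mul_pow, hu2]
  have hrhs : ((a^2 + b^2 - c^2)/2 * c / (a*b) + (b^2 + c^2 - a^2)/2 * a / (b*c)
      + (c^2 + a^2 - b^2)/2 * b / (c*a)) / 4 = H / (8*(a*b*c)) := by
    rw [hHdef]; field_simp; ring
  have hlhs : u * (1/2) / 2 / ((c + a + b)/2) = u / (2*(c+a+b)) := by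
    field_simp
  rw [hrhs, hlhs, div_lt_div_iff₀ (by positivity) (by positivity)]
  nlinarith [mul_lt_mul_of_pos_left h4 hu, hu2]

section Area

open Pointwise

private noncomputable def stdE0 : EuclideanSpace ℝ (Fin 2) := EuclideanSpace.single 0 1
private noncomputable def stdE1 : EuclideanSpace ℝ (Fin 2) := EuclideanSpace.single 1 1

private lemma vol_T2' : volume {z : ℝ × ℝ | 0 ≤ z.1 ∧ 0 ≤ z.2 ∧ z.1 + z.2 ≤ 1}
    = ENNReal.ofReal (1/2) := by
  have hmeas : MeasurableSet {z : ℝ × ℝ | 0 ≤ z.1 ∧ 0 ≤ z.2 ∧ z.1 + z.2 ≤ 1} := by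
    apply MeasurableSet.inter
    · exact measurableSet_le measurable_const measurable_fst
    apply MeasurableSet.inter
    · exact measurableSet_le measurable_const measurable_snd
    · exact measurableSet_le (measurable_fst.add measurable_snd) measurable_const
  rw [Measure.volume_eq_prod, Measure.prod_apply hmeas]
  have hslice : ∀ x : ℝ, volume (Prod.mk x ⁻¹' {z : ℝ × ℝ | 0 ≤ z.1 ∧ 0 ≤ z.2 ∧ z.1 + z.2 ≤ 1})
      = (Set.Icc (0:ℝ) 1).indicator (fun x => ENNReal.ofReal (1 - x)) x := by
    intro x
    by_cases hx : x ∈ Set.Icc (0:ℝ) 1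
    · rw [Set.indicator_of_mem hx]
      have : Prod.mk x ⁻¹' {z : ℝ × ℝ | 0 ≤ z.1 ∧ 0 ≤ z.2 ∧ z.1 + z.2 ≤ 1}
          = Set.Icc 0 (1 - x) := by
        ext y
        simp only [Set.mem_preimage, Set.mem_setOf_eq, Set.mem_Icc]
        constructor
        · rintro ⟨_, h2, h3⟩; exact ⟨h2, by linarith⟩
        · rintro ⟨h2, h3⟩; exact ⟨hx.1, h2, by linarith⟩
      rw [this, Real.volume_Icc]
      norm_num
    · rw [Set.indicator_of_notMem hx]
      have : Prod.mk x ⁻¹' {z : ℝ × ℝ | 0 ≤ z.1 ∧ 0 ≤ z.2 ∧ z.1 + z.2 ≤ 1} = ∅ := by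
        ext y
        simp only [Set.mem_preimage, Set.mem_setOf_eq, Set.mem_empty_iff_false, iff_false]
        rintro ⟨h1, h2, h3⟩
        simp only [Set.mem_Icc, not_and_or, not_le] at hx
        rcases hx with h | h
        · linarith
        · linarith
      rw [this]
      simp
  rw [lintegral_congr hslice, lintegral_indicator measurableSet_Icc]
  have hint : IntegrableOn (fun x : ℝ => 1 - x) (Set.Icc 0 1) volume :=
    (continuous_const.sub continuous_id).integrableOn_Icc
  have hnn : 0 ≤ᵐ[volume.restrict (Set.Icc (0:ℝ) 1)] fun x => 1 - x := by
    filter_upwards [ae_restrict_mem measurableSet_Icc] with x hx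
    simp only [Set.mem_Icc] at hx
    simp only [Pi.zero_apply]
    linarith [hx.2]
  rw [← MeasureTheory.ofReal_integral_eq_lintegral_ofReal hint hnn]
  congr 1
  rw [MeasureTheory.integral_Icc_eq_integral_Ioc, ← intervalIntegral.integral_of_le zero_le_one]
  rw [intervalIntegral.integral_sub intervalIntegrable_const intervalIntegral.intervalIntegrable_id]
  simp [integral_id]
  norm_num

private lemma hull_eq_T' : convexHull ℝ ({0, stdE0, stdE1} : Set (EuclideanSpace ℝ (Fin 2)))
    = {x : EuclideanSpace ℝ (Fin 2) | 0 ≤ x 0 ∧ 0 ≤ x 1 ∧ x 0 + x 1 ≤ 1} := by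
  apply Set.Subset.antisymm
  · apply convexHull_min
    · rintro x (rfl | rfl | rfl) <;>
        simp [stdE0, stdE1, EuclideanSpace.single_apply]
    · rintro x ⟨hx0, hx1, hx2⟩ y ⟨hy0, hy1, hy2⟩ a b ha hb hab
      refine ⟨?_, ?_, ?_⟩ <;>
        simp only [PiLp.add_apply, PiLp.smul_apply, smul_eq_mul]
      · positivity
      · positivity
      · nlinarith
  · rintro x ⟨hx0, hx1, hx2⟩
    rw [show ({0, stdE0, stdE1} : Set (EuclideanSpace ℝ (Fin 2))) = insert 0 {stdE0, stdE1}
        from rfl,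
      convexHull_insert ⟨stdE0, Set.mem_insert stdE0 {stdE1}⟩, mem_convexJoin]
    rcases eq_or_lt_of_le (by linarith : (0:ℝ) ≤ x 0 + x 1) with h0 | h0
    · refine ⟨0, rfl, stdE0, ?_, ?_⟩
      · rw [convexHull_pair]
        exact left_mem_segment ℝ stdE0 stdE1
      · have hx : x = 0 := by
          ext i
          fin_cases i <;> simp <;> linarith
        rw [hx]
        exact left_mem_segment ℝ 0 stdE0
    · set t := x 0 + x 1 with htdef
      refine ⟨0, rfl, (x 0 / t) • stdE0 + (x 1 / t) • stdE1, ?_, ?_⟩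
      · rw [convexHull_pair]
        exact ⟨x 0 / t, x 1 / t, by positivity, by positivity,
          by rw [← add_div, ← htdef, div_self (ne_of_gt h0)], rfl⟩
      · refine ⟨1 - t, t, by linarith, by linarith, by ring, ?_⟩
        ext i
        have ht : t ≠ 0 := ne_of_gt h0
        fin_cases i <;>
          · simp [stdE0, stdE1, EuclideanSpace.single_apply]
            field_simp

private lemma vol_T_E2' :
    volume {x : EuclideanSpace ℝ (Fin 2) | 0 ≤ x 0 ∧ 0 ≤ x 1 ∧ x 0 + x 1 ≤ 1}
      = ENNReal.ofReal (1/2) := by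
  have h1 := EuclideanSpace.volume_preserving_symm_measurableEquiv_toLp (Fin 2)
  have h2 := volume_preserving_finTwoArrow ℝ
  have hmeas : MeasurableSet {z : ℝ × ℝ | 0 ≤ z.1 ∧ 0 ≤ z.2 ∧ z.1 + z.2 ≤ 1} := by
    apply MeasurableSet.inter
    · exact measurableSet_le measurable_const measurable_fst
    apply MeasurableSet.inter
    · exact measurableSet_le measurable_const measurable_snd
    · exact measurableSet_le (measurable_fst.add measurable_snd) measurable_const
  have key := (h2.comp h1).measure_preimage hmeas.nullMeasurableSet
  have hpre : (MeasurableEquiv.finTwoArrow ∘ (MeasurableEquiv.toLp 2 (Fin 2 → ℝ)).symm) ⁻¹'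
      {z : ℝ × ℝ | 0 ≤ z.1 ∧ 0 ≤ z.2 ∧ z.1 + z.2 ≤ 1}
      = {x : EuclideanSpace ℝ (Fin 2) | 0 ≤ x 0 ∧ 0 ≤ x 1 ∧ x 0 + x 1 ≤ 1} := by
    ext x
    simp [MeasurableEquiv.finTwoArrow]
  rw [hpre] at key
  rw [key, vol_T2']

private noncomputable def shear' (p q : EuclideanSpace ℝ (Fin 2)) :
    EuclideanSpace ℝ (Fin 2) →ₗ[ℝ] EuclideanSpace ℝ (Fin 2) where
  toFun := fun v => v 0 • p + v 1 • q
  map_add' := by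
    intro v w
    simp only [PiLp.add_apply, add_smul]
    abel
  map_smul' := by
    intro c v
    simp only [PiLp.smul_apply, smul_eq_mul, RingHom.id_apply, smul_add, smul_smul]

private lemma shear_det' (p q : EuclideanSpace ℝ (Fin 2)) :
    LinearMap.det (shear' p q) = p 0 * q 1 - q 0 * p 1 := by
  let b := (EuclideanSpace.basisFun (Fin 2) ℝ).toBasis
  rw [← LinearMap.det_toMatrix b]
  have hM : LinearMap.toMatrix b b (shear' p q) = !![p 0, q 0; p 1, q 1] := by
    ext i j
    rw [LinearMap.toMatrix_apply]
    have hb : ∀ j : Fin 2, b j = EuclideanSpace.single j 1 := fun j => by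
      simp [b]
    rw [hb]
    have : (shear' p q) (EuclideanSpace.single j 1) = if j = 0 then p else q := by
      fin_cases j <;>
        · show (EuclideanSpace.single _ 1 : EuclideanSpace ℝ (Fin 2)) 0 • p
            + (EuclideanSpace.single _ 1 : EuclideanSpace ℝ (Fin 2)) 1 • q = _
          simp [shear', LinearMap.coe_mk, AddHom.coe_mk, EuclideanSpace.single_apply]
    rw [this]
    have hrepr : ∀ (x : EuclideanSpace ℝ (Fin 2)) (i : Fin 2), b.repr x i = x i := fun x i => by
      simp [b, OrthonormalBasis.coe_toBasis_repr_apply, EuclideanSpace.basisFun_repr]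
    fin_cases i <;> fin_cases j <;> simp [hrepr]
  rw [hM, Matrix.det_fin_two_of]

private lemma vadd_hull' (A : EuclideanSpace ℝ (Fin 2)) (s : Set (EuclideanSpace ℝ (Fin 2))) :
    (fun v => A + v) '' (convexHull ℝ s) = convexHull ℝ ((fun v => A + v) '' s) := by
  have h := ((AffineEquiv.constVAdd ℝ (EuclideanSpace ℝ (Fin 2)) A).toAffineMap).image_convexHull s
  have hco : ⇑(AffineEquiv.constVAdd ℝ (EuclideanSpace ℝ (Fin 2)) A).toAffineMap
      = fun v => A + v := by
    funext v
    simp [AffineEquiv.constVAdd_apply]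
  rwa [hco] at h

private lemma shear_image' (A B C : EuclideanSpace ℝ (Fin 2)) :
    (fun v => A + v) '' ((shear' (B - A) (C - A)) ''
        (convexHull ℝ ({0, stdE0, stdE1} : Set (EuclideanSpace ℝ (Fin 2)))))
      = convexHull ℝ ({A, B, C} : Set (EuclideanSpace ℝ (Fin 2))) := by
  rw [LinearMap.image_convexHull]
  have himg : (shear' (B - A) (C - A)) '' {0, stdE0, stdE1} = {0, B - A, C - A} := by
    rw [Set.image_insert_eq, Set.image_insert_eq, Set.image_singleton]
    congr 1
    · exact map_zero _
    congr 1
    · show (stdE0 0) • (B - A) + (stdE0 1) • (C - A) = B - A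
      simp [stdE0, EuclideanSpace.single_apply]
    congr 1
    · show (stdE1 0) • (B - A) + (stdE1 1) • (C - A) = C - A
      simp [stdE1, EuclideanSpace.single_apply]
  rw [himg, vadd_hull']
  congr 1
  rw [Set.image_insert_eq, Set.image_insert_eq, Set.image_singleton]
  congr 1
  · exact add_zero A
  congr 1
  · exact add_sub_cancel A B
  congr 1
  · exact add_sub_cancel A C

private lemma inner_coords (x y : EuclideanSpace ℝ (Fin 2)) :
    (inner ℝ x y : ℝ) = x 0 * y 0 + x 1 * y 1 := by
  simp [PiLp.inner_apply, Fin.sum_univ_two, RCLike.inner_apply, mul_comm]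

private lemma norm_sq_coords (x : EuclideanSpace ℝ (Fin 2)) :
    ‖x‖^2 = x 0^2 + x 1^2 := by
  rw [← real_inner_self_eq_norm_sq, inner_coords]
  ring

private lemma vol_hull' (A B C : EuclideanSpace ℝ (Fin 2)) :
    (volume (convexHull ℝ ({A, B, C} : Set (EuclideanSpace ℝ (Fin 2))))).toReal
      = Real.sqrt (‖B - A‖^2 * ‖C - A‖^2 - (inner ℝ (B - A) (C - A) : ℝ)^2) / 2 := by
  rw [← shear_image' A B C]
  have himg : (fun v => A + v) '' ((shear' (B - A) (C - A)) ''
      (convexHull ℝ ({0, stdE0, stdE1} : Set (EuclideanSpace ℝ (Fin 2)))))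
      = A +ᵥ ((shear' (B - A) (C - A)) ''
      (convexHull ℝ ({0, stdE0, stdE1} : Set (EuclideanSpace ℝ (Fin 2))))) := by
    rw [← Set.image_vadd]
    rfl
  rw [himg, measure_vadd, Measure.addHaar_image_linearMap, shear_det', hull_eq_T', vol_T_E2']
  rw [← ENNReal.ofReal_mul (abs_nonneg _)]
  rw [ENNReal.toReal_ofReal (by positivity)]
  have habs : |(B - A) 0 * (C - A) 1 - (C - A) 0 * (B - A) 1|
      = Real.sqrt (‖B - A‖^2 * ‖C - A‖^2 - (inner ℝ (B - A) (C - A) : ℝ)^2) := by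
    rw [← Real.sqrt_sq_eq_abs]
    congr 1
    rw [norm_sq_coords, norm_sq_coords, inner_coords]
    ring
  rw [habs]
  ring

end Area

/-- Claim 1: for an acute triangle with inradius `r`, the perimeter `y` of its orthic
(pedal) triangle satisfies `r < y/4`. -/
theorem stmt_10 (A B C HA HB HC : EuclideanSpace ℝ (Fin 2)) (s S r y : ℝ)
    (hind : AffineIndependent ℝ ![A, B, C])
    (hacuteA : ∠ B A C < π / 2)
    (hacuteB : ∠ A B C < π / 2)
    (hacuteC : ∠ A C B < π / 2)
    -- `HA`, `HB`, `HC` are the feet of the altitudes from `A`, `B`, `C`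
    (hHAmem : HA ∈ affineSpan ℝ ({B, C} : Set (EuclideanSpace ℝ (Fin 2))))
    (hHAperp : inner ℝ (A - HA) (B - C) = (0 : ℝ))
    (hHBmem : HB ∈ affineSpan ℝ ({C, A} : Set (EuclideanSpace ℝ (Fin 2))))
    (hHBperp : inner ℝ (B - HB) (C - A) = (0 : ℝ))
    (hHCmem : HC ∈ affineSpan ℝ ({A, B} : Set (EuclideanSpace ℝ (Fin 2))))
    (hHCperp : inner ℝ (C - HC) (A - B) = (0 : ℝ))
    (hs : s = (dist A B + dist B C + dist C A) / 2)
    (hS : S = (volume (convexHull ℝ ({A, B, C} : Set (EuclideanSpace ℝ (Fin 2))))).toReal)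
    (hr : r = S / s)
    (hy : y = dist HA HB + dist HB HC + dist HC HA) :
    r < y / 4 := by
  -- distinctness
  have hAB : A ≠ B := by
    intro h
    have h2 : ((0:Fin 3)) = 1 := hind.injective (show ![A,B,C] 0 = ![A,B,C] 1 by simp [h])
    exact absurd h2 (by decide)
  have hAC : A ≠ C := by
    intro h
    have h2 : ((0:Fin 3)) = 2 := hind.injective (show ![A,B,C] 0 = ![A,B,C] 2 by simp [h])
    exact absurd h2 (by decide)
  have hBC : B ≠ C := by
    intro h
    have h2 : ((1:Fin 3)) = 2 := hind.injective (show ![A,B,C] 1 = ![A,B,C] 2 by simp [h])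
    exact absurd h2 (by decide)
  set a : ℝ := dist B C with ha_def
  set b : ℝ := dist C A with hb_def
  set c : ℝ := dist A B with hc_def
  have hapos : 0 < a := dist_pos.mpr hBC
  have hbpos : 0 < b := dist_pos.mpr (Ne.symm hAC)
  have hcpos : 0 < c := dist_pos.mpr hAB
  -- nonzero difference vectors
  have hBA : B - A ≠ 0 := sub_ne_zero.mpr (Ne.symm hAB)
  have hCA : C - A ≠ 0 := sub_ne_zero.mpr (Ne.symm hAC)
  have hAB' : A - B ≠ 0 := sub_ne_zero.mpr hAB
  have hCB : C - B ≠ 0 := sub_ne_zero.mpr (Ne.symm hBC)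
  have hACv : A - C ≠ 0 := sub_ne_zero.mpr hAC
  have hBCv : B - C ≠ 0 := sub_ne_zero.mpr hBC
  -- norms as distances
  have na : ‖B - C‖ = a := (dist_eq_norm B C).symm
  have na' : ‖C - B‖ = a := by rw [norm_sub_rev]; exact na
  have nb : ‖C - A‖ = b := (dist_eq_norm C A).symm
  have nb' : ‖A - C‖ = b := by rw [norm_sub_rev]; exact nb
  have nc : ‖A - B‖ = c := (dist_eq_norm A B).symm
  have nc' : ‖B - A‖ = c := by rw [norm_sub_rev]; exact nc
  -- positive inner ℝ products (acute angles)
  have htA : 0 < (inner ℝ (B - A) (C - A) : ℝ) := by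
    apply inner_pos_of_angle_lt' _ _ hBA hCA
    exact hacuteA
  have htB : 0 < (inner ℝ (A - B) (C - B) : ℝ) := by
    apply inner_pos_of_angle_lt' _ _ hAB' hCB
    exact hacuteB
  have htC : 0 < (inner ℝ (A - C) (B - C) : ℝ) := by
    apply inner_pos_of_angle_lt' _ _ hACv hBCv
    exact hacuteC
  -- law of cosines
  have lawA : (inner ℝ (B - A) (C - A) : ℝ) = (b^2 + c^2 - a^2)/2 := by
    have h := norm_sub_sq_real (B - A) (C - A)
    rw [show (B - A) - (C - A) = B - C by abel, na, nc', nb] at h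
    linarith
  have lawB : (inner ℝ (A - B) (C - B) : ℝ) = (c^2 + a^2 - b^2)/2 := by
    have h := norm_sub_sq_real (A - B) (C - B)
    rw [show (A - B) - (C - B) = A - C by abel, nb', nc, na'] at h
    linarith
  have lawC : (inner ℝ (A - C) (B - C) : ℝ) = (a^2 + b^2 - c^2)/2 := by
    have h := norm_sub_sq_real (A - C) (B - C)
    rw [show (A - C) - (B - C) = A - B by abel, nc, nb', na] at h
    linarith
  -- acuteness in side lengths
  have hA2 : a^2 < b^2 + c^2 := by rw [lawA] at htA; linarith
  have hB2 : b^2 < a^2 + c^2 := by rw [lawB] at htB; linarith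
  have hC2 : c^2 < a^2 + b^2 := by rw [lawC] at htC; linarith
  -- feet of the altitudes, expressed from each vertex
  have hHB1 : HB = A + ((inner ℝ (B - A) (C - A) : ℝ) / ‖C - A‖^2) • (C - A) :=
    foot_eq' B C A HB hHBmem hHBperp (Ne.symm hAC)
  have hHC1 : HC = A + ((inner ℝ (C - A) (B - A) : ℝ) / ‖B - A‖^2) • (B - A) := by
    apply foot_eq' C B A HC
    · rwa [Set.pair_comm A B] at hHCmem
    · rw [show B - A = -(A - B) by abel, inner_neg_right, hHCperp, neg_zero]
    · exact Ne.symm hAB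
  have hHC2 : HC = B + ((inner ℝ (C - B) (A - B) : ℝ) / ‖A - B‖^2) • (A - B) :=
    foot_eq' C A B HC hHCmem hHCperp hAB
  have hHA2 : HA = B + ((inner ℝ (A - B) (C - B) : ℝ) / ‖C - B‖^2) • (C - B) := by
    apply foot_eq' A C B HA
    · rwa [Set.pair_comm B C] at hHAmem
    · rw [show C - B = -(B - C) by abel, inner_neg_right, hHAperp, neg_zero]
    · exact Ne.symm hBC
  have hHA3 : HA = C + ((inner ℝ (A - C) (B - C) : ℝ) / ‖B - C‖^2) • (B - C) :=
    foot_eq' A B C HA hHAmem hHAperp hBC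
  have hHB3 : HB = C + ((inner ℝ (B - C) (A - C) : ℝ) / ‖A - C‖^2) • (A - C) := by
    apply foot_eq' B A C HB
    · rwa [Set.pair_comm C A] at hHBmem
    · rw [show A - C = -(C - A) by abel, inner_neg_right, hHBperp, neg_zero]
    · exact hAC
  -- distances between feet
  have dBC : dist HB HC = ((b^2 + c^2 - a^2)/2) * a / (c * b) := by
    rw [hHB1, hHC1, dist_add_left]
    rw [show (inner ℝ (C - A) (B - A) : ℝ) = inner ℝ (B - A) (C - A) from real_inner_comm _ _]
    rw [lawA, nb, nc']
    have h := dist_feet' (B - A) (C - A) hBA hCA htA.le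
    rw [show (B - A) - (C - A) = B - C by abel, na, nc', nb, lawA] at h
    exact h
  have dCA : dist HC HA = ((c^2 + a^2 - b^2)/2) * b / (a * c) := by
    rw [hHC2, hHA2, dist_add_left]
    rw [show (inner ℝ (A - B) (C - B) : ℝ) = inner ℝ (C - B) (A - B) from real_inner_comm _ _]
    have htB' : 0 < (inner ℝ (C - B) (A - B) : ℝ) := by
      rw [show (inner ℝ (C - B) (A - B) : ℝ) = inner ℝ (A - B) (C - B) from real_inner_comm _ _]
      exact htB
    rw [show (inner ℝ (C - B) (A - B) : ℝ) = inner ℝ (A - B) (C - B) from real_inner_comm _ _,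
      lawB, nc, na']
    have h := dist_feet' (C - B) (A - B) hCB hAB' htB'.le
    rw [show (C - B) - (A - B) = C - A by abel, nb, na', nc] at h
    rw [show (inner ℝ (C - B) (A - B) : ℝ) = inner ℝ (A - B) (C - B) from real_inner_comm _ _,
      lawB] at h
    exact h
  have dAB : dist HA HB = ((a^2 + b^2 - c^2)/2) * c / (b * a) := by
    rw [hHA3, hHB3, dist_add_left]
    rw [show (inner ℝ (B - C) (A - C) : ℝ) = inner ℝ (A - C) (B - C) from real_inner_comm _ _]
    rw [lawC, na, nb']
    have h := dist_feet' (A - C) (B - C) hACv hBCv htC.le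
    rw [show (A - C) - (B - C) = A - B by abel, nc, nb', na, lawC] at h
    exact h
  -- the perimeter of the orthic triangle
  have hyY : y = (a^2 + b^2 - c^2)/2 * c / (a*b) + (b^2 + c^2 - a^2)/2 * a / (b*c)
      + (c^2 + a^2 - b^2)/2 * b / (c*a) := by
    rw [hy, dAB, dBC, dCA]
    ring
  -- the area
  have hSeq : S = Real.sqrt (b^2 * c^2 - ((b^2 + c^2 - a^2)/2)^2) / 2 := by
    rw [hS, vol_hull', nc', nb, lawA, mul_comm (c^2) (b^2)]
  rw [hr, hSeq, hs, hyY]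
  exact key' a b c hapos hbpos hcpos hA2 hB2 hC2
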